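/- The variety of flexes of plane cubics X ⊂ P² × P⁹ is unirational, i.e., there exists a dominant rational map from a projective space to X. -/

import Mathlib

open MvPolynomial Matrix

noncomputable def hesseCubic (l : ℂ) : MvPolynomial (Fin 3) ℂ :=
  X 0 ^ 3 + X 1 ^ 3 + X 2 ^ 3 + C l * (X 0 * X 1 * X 2)

noncomputable def cubicMonomial (m : Sym (Fin 3) 3) : MvPolynomial (Fin 3) ℂ :=
  ((m : Multiset (Fin 3)).map X).prod

noncomputable def cubicOf (a : Sym (Fin 3) 3 → ℂ) : MvPolynomial (Fin 3) ℂ :=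
  ∑ m : Sym (Fin 3) 3, C (a m) * cubicMonomial m

noncomputable def coeffVec (f : MvPolynomial (Fin 3) ℂ) : Sym (Fin 3) 3 → ℂ :=
  fun m => coeff (Multiset.toFinsupp (m : Multiset (Fin 3))) f

noncomputable def hessianDet (f : MvPolynomial (Fin 3) ℂ) : MvPolynomial (Fin 3) ℂ :=
  (Matrix.of fun i j : Fin 3 => pderiv i (pderiv j f)).det

abbrev P2 : Type := Projectivization ℂ (Fin 3 → ℂ)
abbrev P9 : Type := Projectivization ℂ (Sym (Fin 3) 3 → ℂ)

def FlexVariety : Set (P2 × P9) :=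
  {z | ∃ (x : Fin 3 → ℂ) (hx : x ≠ 0) (a : Sym (Fin 3) 3 → ℂ) (ha : a ≠ 0),
    z = (Projectivization.mk ℂ x hx, Projectivization.mk ℂ a ha) ∧
    eval x (cubicOf a) = 0 ∧ eval x (hessianDet (cubicOf a)) = 0}

/-- The thirteen homogeneous coordinates on `P² × P⁹`: three `x`-variables and
ten `a`-variables. -/
abbrev Vars : Type := Fin 3 ⊕ Sym (Fin 3) 3

/-- A polynomial in the coordinates of `P² × P⁹` is bihomogeneous of bidegree `(m, n)`
if it is homogeneous of degree `m` in the `x`-variables and of degree `n` in the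
`a`-variables. -/
def IsBihomogeneous (P : MvPolynomial Vars ℂ) (m n : ℕ) : Prop :=
  P.IsWeightedHomogeneous (Sum.elim (fun _ => 1) (fun _ => 0)) m ∧
  P.IsWeightedHomogeneous (Sum.elim (fun _ => 0) (fun _ => 1)) n

/-- A polynomial in the coordinates of `P² × P⁹` vanishes on a set `S ⊆ P² × P⁹`. -/
def VanishesOn (P : MvPolynomial Vars ℂ) (S : Set (P2 × P9)) : Prop :=
  ∀ (x : Fin 3 → ℂ) (hx : x ≠ 0) (a : Sym (Fin 3) 3 → ℂ) (ha : a ≠ 0),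
    (Projectivization.mk ℂ x hx, Projectivization.mk ℂ a ha) ∈ S →
      eval (Sum.elim x a) P = 0

/-- A subset `S` of the variety of flexes `X ⊆ P² × P⁹` is (Zariski) dense in `X`:
every bihomogeneous polynomial vanishing on `S` vanishes on `X`.  A map with image `S`
is then dominant onto `X`. -/
def IsDenseInFlexVariety (S : Set (P2 × P9)) : Prop :=
  S ⊆ FlexVariety ∧
  ∀ (P : MvPolynomial Vars ℂ) (m n : ℕ), IsBihomogeneous P m n →
    VanishesOn P S → VanishesOn P FlexVariety

/-- The image of the rational map `P^N ⇢ P² × P⁹` given by homogeneous forms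
`g = (g₁, g₂, g₃)` and `h = (h_m)_m` (defined where `g ≠ 0` and `h ≠ 0`). -/
def rationalImage {N : ℕ} (g : Fin 3 → MvPolynomial (Fin (N + 1)) ℂ)
    (h : Sym (Fin 3) 3 → MvPolynomial (Fin (N + 1)) ℂ) : Set (P2 × P9) :=
  {z | ∃ (v : Fin (N + 1) → ℂ) (hg : (fun i => eval v (g i)) ≠ 0)
      (hh : (fun m => eval v (h m)) ≠ 0),
    z = (Projectivization.mk ℂ _ hg, Projectivization.mk ℂ _ hh)}

namespace FlexProof

noncomputable abbrev mtf {n : ℕ} (m : Sym (Fin 3) n) : Fin 3 →₀ ℕ :=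
  Multiset.toFinsupp (m : Multiset (Fin 3))

lemma mtf_injective {n : ℕ} : Function.Injective (@mtf n) := by
  intro m m' h
  exact Sym.coe_injective (Multiset.toFinsupp.injective h)

lemma mtf_degree {n : ℕ} (m : Sym (Fin 3) n) : (mtf m).degree = n := by
  have h := Multiset.toFinsupp_sum_eq (m : Multiset (Fin 3))
  rw [Finsupp.sum] at h
  rw [Finsupp.degree]
  exact h.trans m.2

/-- Every homogeneous polynomial of degree `n` is the sum of its monomials indexed by
`Sym (Fin 3) n`. -/
lemma sum_sym_coeff {n : ℕ} (f : MvPolynomial (Fin 3) ℂ) (hf : f.IsHomogeneous n) :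
    (∑ m : Sym (Fin 3) n, C (coeff (mtf m) f) * monomial (mtf m) 1) = f := by
  have h1 : ∀ d : Fin 3 →₀ ℕ, C (coeff d f) * monomial d (1 : ℂ) = monomial d (coeff d f) := by
    intro d; rw [C_mul_monomial, mul_one]
  simp_rw [h1]
  classical
  have himg := Finset.sum_image (s := (Finset.univ : Finset (Sym (Fin 3) n)))
      (f := fun d : Fin 3 →₀ ℕ => monomial d (coeff d f))
      (g := fun m : Sym (Fin 3) n => mtf m)
      (fun a _ b _ h => mtf_injective h)
  rw [← himg]
  have hsub : f.support ⊆ Finset.univ.image (fun m : Sym (Fin 3) n => mtf m) := by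
    intro d hd
    have hdeg : d.degree = n := by
      rw [Finsupp.degree_eq_weight_one]; exact hf (mem_support_iff.mp hd)
    have hcard : Multiset.card (Finsupp.toMultiset d) = n := by
      rw [Finsupp.card_toMultiset, ← hdeg, Finsupp.degree, Finsupp.sum]; rfl
    refine Finset.mem_image.mpr ⟨⟨Finsupp.toMultiset d, hcard⟩, Finset.mem_univ _, ?_⟩
    simp [mtf]
  rw [← Finset.sum_subset hsub (fun d _ hd => by
    rw [notMem_support_iff.mp hd, monomial_zero])]
  exact f.support_sum_monomial_coeff

lemma prod_map_X (s : Multiset (Fin 3)) :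
    (s.map X).prod = monomial (Multiset.toFinsupp s) (1 : ℂ) := by
  induction s using Multiset.induction_on with
  | empty => simp [Multiset.toFinsupp_zero, monomial_zero']
  | cons a s ih =>
      rw [Multiset.map_cons, Multiset.prod_cons, ih,
        show (X a : MvPolynomial (Fin 3) ℂ) = monomial (Finsupp.single a 1) 1 from rfl,
        monomial_mul, one_mul, ← Multiset.singleton_add, Multiset.toFinsupp_add,
        Multiset.toFinsupp_singleton]

lemma cubicMonomial_eq (m : Sym (Fin 3) 3) :
    cubicMonomial m = monomial (mtf m) 1 := prod_map_X _

lemma coeff_cubicOf (a : Sym (Fin 3) 3 → ℂ) (m : Sym (Fin 3) 3) :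
    coeff (mtf m) (cubicOf a) = a m := by
  rw [cubicOf]
  simp_rw [cubicMonomial_eq, C_mul_monomial, mul_one]
  rw [coeff_sum, Finset.sum_eq_single m]
  · rw [coeff_monomial, if_pos rfl]
  · intro m' _ hne
    rw [coeff_monomial, if_neg (fun h => hne (mtf_injective h))]
  · intro h; exact absurd (Finset.mem_univ m) h

lemma cubicOf_isHomogeneous (a : Sym (Fin 3) 3 → ℂ) : (cubicOf a).IsHomogeneous 3 := by
  rw [cubicOf]
  exact IsHomogeneous.sum _ _ _ (fun m _ => by
    rw [cubicMonomial_eq, C_mul_monomial, mul_one]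
    exact isHomogeneous_monomial _ (mtf_degree m))

lemma cubicOf_coeff_eq (f : MvPolynomial (Fin 3) ℂ) (hf : f.IsHomogeneous 3) :
    cubicOf (fun m => coeff (mtf m) f) = f := by
  rw [cubicOf]; simp_rw [cubicMonomial_eq]; exact sum_sym_coeff f hf

lemma sym3_triple (m : Sym (Fin 3) 3) :
    ∃ i j k : Fin 3, cubicMonomial m = X i * (X j * X k) := by
  obtain ⟨i, j, k, hm⟩ := Multiset.card_eq_three.mp m.2
  refine ⟨i, j, k, ?_⟩
  rw [cubicMonomial, show (m : Multiset (Fin 3)) = {i, j, k} from hm]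
  simp

set_option maxHeartbeats 3000000 in
lemma mon_taylor (m : Sym (Fin 3) 3) (x y : Fin 3 → ℂ) (s t : ℂ) :
    eval (fun i => s * x i + t * y i) (cubicMonomial m) =
      s^3 * eval x (cubicMonomial m)
      + s^2*t * (∑ j, y j * eval x (pderiv j (cubicMonomial m)))
      + s*t^2 * (∑ j, x j * eval y (pderiv j (cubicMonomial m)))
      + t^3 * eval y (cubicMonomial m) := by
  obtain ⟨i, j, k, hm⟩ := sym3_triple m
  rw [hm]
  fin_cases i <;> fin_cases j <;> fin_cases k <;>
    (simp [Fin.sum_univ_three, pderiv_mul, Pi.single_apply]; try ring)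

set_option maxHeartbeats 3000000 in
lemma mon_R2 (m : Sym (Fin 3) 3) (x y : Fin 3 → ℂ) :
    (∑ p, ∑ q, y p * y q * eval x (pderiv p (pderiv q (cubicMonomial m)))) =
      2 * ∑ j, x j * eval y (pderiv j (cubicMonomial m)) := by
  obtain ⟨i, j, k, hm⟩ := sym3_triple m
  rw [hm]
  fin_cases i <;> fin_cases j <;> fin_cases k <;>
    (simp [Fin.sum_univ_three, pderiv_mul, Pi.single_apply]; try ring)

set_option maxHeartbeats 3000000 in
lemma mon_R3 (m : Sym (Fin 3) 3) (x z : Fin 3 → ℂ) :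
    (∑ p, ∑ q, x p * z q * eval x (pderiv p (pderiv q (cubicMonomial m)))) =
      2 * ∑ j, z j * eval x (pderiv j (cubicMonomial m)) := by
  obtain ⟨i, j, k, hm⟩ := sym3_triple m
  rw [hm]
  fin_cases i <;> fin_cases j <;> fin_cases k <;>
    (simp [Fin.sum_univ_three, pderiv_mul, Pi.single_apply]; try ring)

set_option maxHeartbeats 9000000 in
lemma mon_R4 (m : Sym (Fin 3) 3) (x : Fin 3 → ℂ) (p : Fin 3) :
    (∑ q, x q * eval x (pderiv p (pderiv q (cubicMonomial m)))) =
      2 * eval x (pderiv p (cubicMonomial m)) := by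
  obtain ⟨i, j, k, hm⟩ := sym3_triple m
  rw [hm]
  fin_cases p <;> fin_cases i <;> fin_cases j <;> fin_cases k <;>
    (simp [Fin.sum_univ_three, pderiv_mul, Pi.single_apply]; try ring)

lemma eval_cubicOf (a : Sym (Fin 3) 3 → ℂ) (u : Fin 3 → ℂ) :
    eval u (cubicOf a) = ∑ m : Sym (Fin 3) 3, a m * eval u (cubicMonomial m) := by
  rw [cubicOf, map_sum]; simp [eval_mul]

lemma eval_pd_cubicOf (a : Sym (Fin 3) 3 → ℂ) (j : Fin 3) (u : Fin 3 → ℂ) :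
    eval u (pderiv j (cubicOf a)) =
      ∑ m : Sym (Fin 3) 3, a m * eval u (pderiv j (cubicMonomial m)) := by
  rw [cubicOf, map_sum, map_sum]
  simp_rw [pderiv_C_mul]
  simp [eval_mul]

lemma eval_pd2_cubicOf (a : Sym (Fin 3) 3 → ℂ) (p q : Fin 3) (u : Fin 3 → ℂ) :
    eval u (pderiv p (pderiv q (cubicOf a))) =
      ∑ m : Sym (Fin 3) 3, a m * eval u (pderiv p (pderiv q (cubicMonomial m))) := by
  rw [cubicOf, map_sum, map_sum, map_sum]
  simp_rw [pderiv_C_mul]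
  simp [eval_mul]

lemma swap_mul_sum (c : Fin 3 → ℂ) (a : Sym (Fin 3) 3 → ℂ) (t : Sym (Fin 3) 3 → Fin 3 → ℂ) :
    (∑ j, c j * ∑ m : Sym (Fin 3) 3, a m * t m j)
      = ∑ m : Sym (Fin 3) 3, a m * ∑ j, c j * t m j := by
  simp_rw [Finset.mul_sum]
  rw [Finset.sum_comm]
  exact Finset.sum_congr rfl fun m _ => Finset.sum_congr rfl fun j _ => by ring

lemma swap_mul_sum2 (c d : Fin 3 → ℂ) (a : Sym (Fin 3) 3 → ℂ)
    (t : Sym (Fin 3) 3 → Fin 3 → Fin 3 → ℂ) :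
    (∑ p, ∑ q, c p * d q * ∑ m : Sym (Fin 3) 3, a m * t m p q)
      = ∑ m : Sym (Fin 3) 3, a m * ∑ p, ∑ q, c p * d q * t m p q := by
  have h1 : ∀ p, (∑ q, c p * d q * ∑ m : Sym (Fin 3) 3, a m * t m p q)
      = ∑ m : Sym (Fin 3) 3, a m * ∑ q, c p * d q * t m p q := by
    intro p
    simp_rw [Finset.mul_sum]
    rw [Finset.sum_comm]
    exact Finset.sum_congr rfl fun m _ => Finset.sum_congr rfl fun q _ => by ring
  simp_rw [h1]
  rw [Finset.sum_comm]
  exact Finset.sum_congr rfl fun m _ => by rw [Finset.mul_sum]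

lemma cubic_taylor (a : Sym (Fin 3) 3 → ℂ) (x y : Fin 3 → ℂ) (s t : ℂ) :
    eval (fun i => s * x i + t * y i) (cubicOf a) =
      s^3 * eval x (cubicOf a)
      + s^2*t * (∑ j, y j * eval x (pderiv j (cubicOf a)))
      + s*t^2 * (∑ j, x j * eval y (pderiv j (cubicOf a)))
      + t^3 * eval y (cubicOf a) := by
  rw [eval_cubicOf, eval_cubicOf, eval_cubicOf]
  simp_rw [eval_pd_cubicOf]
  rw [swap_mul_sum y a (fun m j => eval x (pderiv j (cubicMonomial m))),
    swap_mul_sum x a (fun m j => eval y (pderiv j (cubicMonomial m))),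
    Finset.mul_sum, Finset.mul_sum, Finset.mul_sum, Finset.mul_sum,
    ← Finset.sum_add_distrib, ← Finset.sum_add_distrib, ← Finset.sum_add_distrib]
  refine Finset.sum_congr rfl fun m _ => ?_
  rw [mon_taylor m x y s t]
  ring

lemma cubic_R2 (a : Sym (Fin 3) 3 → ℂ) (x y : Fin 3 → ℂ) :
    (∑ p, ∑ q, y p * y q * eval x (pderiv p (pderiv q (cubicOf a)))) =
      2 * ∑ j, x j * eval y (pderiv j (cubicOf a)) := by
  simp_rw [eval_pd2_cubicOf, eval_pd_cubicOf]
  rw [swap_mul_sum2 y y a (fun m p q => eval x (pderiv p (pderiv q (cubicMonomial m)))),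
    swap_mul_sum x a (fun m j => eval y (pderiv j (cubicMonomial m))), Finset.mul_sum]
  exact Finset.sum_congr rfl fun m _ => by rw [mon_R2 m x y]; ring

lemma cubic_R3 (a : Sym (Fin 3) 3 → ℂ) (x z : Fin 3 → ℂ) :
    (∑ p, ∑ q, x p * z q * eval x (pderiv p (pderiv q (cubicOf a)))) =
      2 * ∑ j, z j * eval x (pderiv j (cubicOf a)) := by
  simp_rw [eval_pd2_cubicOf, eval_pd_cubicOf]
  rw [swap_mul_sum2 x z a (fun m p q => eval x (pderiv p (pderiv q (cubicMonomial m)))),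
    swap_mul_sum z a (fun m j => eval x (pderiv j (cubicMonomial m))), Finset.mul_sum]
  exact Finset.sum_congr rfl fun m _ => by rw [mon_R3 m x z]; ring

lemma cubic_R4 (a : Sym (Fin 3) 3 → ℂ) (x : Fin 3 → ℂ) (p : Fin 3) :
    (∑ q, x q * eval x (pderiv p (pderiv q (cubicOf a)))) =
      2 * eval x (pderiv p (cubicOf a)) := by
  simp_rw [eval_pd2_cubicOf, eval_pd_cubicOf]
  rw [swap_mul_sum x a (fun m q => eval x (pderiv p (pderiv q (cubicMonomial m)))), Finset.mul_sum]
  exact Finset.sum_congr rfl fun m _ => by rw [mon_R4 m x p]; ring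

/-! ### The parameter space and the universal family -/

abbrev PVar : Type := (Fin 3 ⊕ Fin 3) ⊕ (Fin 3 ⊕ (Sym (Fin 3) 2 ⊕ Fin 2))

lemma card_pvar : Fintype.card PVar = 17 := by decide

noncomputable def pe : PVar ≃ Fin 17 := Fintype.equivFinOfCardEq card_pvar

abbrev PS : Type := MvPolynomial (Fin 17) ℂ

noncomputable def vx (i : Fin 3) : PS := X (pe (Sum.inl (Sum.inl i)))
noncomputable def vy (i : Fin 3) : PS := X (pe (Sum.inl (Sum.inr i)))
noncomputable def vw (i : Fin 3) : PS := X (pe (Sum.inr (Sum.inl i)))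
noncomputable def vq (m : Sym (Fin 3) 2) : PS := X (pe (Sum.inr (Sum.inr (Sum.inl m))))
noncomputable def vc : PS := X (pe (Sum.inr (Sum.inr (Sum.inr 0))))
noncomputable def vu : PS := X (pe (Sum.inr (Sum.inr (Sum.inr 1))))

/-- The cross product of two vectors (over any commutative ring). -/
def crossV {R : Type*} [CommRing R] (x y : Fin 3 → R) : Fin 3 → R :=
  ![x 1 * y 2 - x 2 * y 1, x 2 * y 0 - x 0 * y 2, x 0 * y 1 - x 1 * y 0]

/-- The linear form with coefficient vector `c`. -/
noncomputable def linP {R : Type*} [CommRing R] (c : Fin 3 → R) : MvPolynomial (Fin 3) R :=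
  ∑ i, C (c i) * X i

/-- The quadratic form with coefficient vector `q`. -/
noncomputable def quadP {R : Type*} [CommRing R] (q : Sym (Fin 3) 2 → R) :
    MvPolynomial (Fin 3) R :=
  ∑ m : Sym (Fin 3) 2, C (q m) * monomial (mtf m) 1

/-- The universal family of cubics with a distinguished flex. -/
noncomputable def FF : MvPolynomial (Fin 3) PS :=
  linP (crossV vx vy) * (C (vu ^ 4) * quadP vq) + C vc * (linP (crossV vx vw)) ^ 3

noncomputable def gP (i : Fin 3) : PS := vx i
noncomputable def hP (m : Sym (Fin 3) 3) : PS := coeff (mtf m) FF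

/-! ### Bihomogeneity via coefficientwise homogeneity -/

def CoeffHom (P : MvPolynomial (Fin 3) PS) (d : ℕ) : Prop :=
  ∀ t : Fin 3 →₀ ℕ, (coeff t P).IsHomogeneous d

lemma CoeffHom.add {P Q : MvPolynomial (Fin 3) PS} {d : ℕ}
    (hP : CoeffHom P d) (hQ : CoeffHom Q d) : CoeffHom (P + Q) d := fun t => by
  rw [coeff_add]; exact (hP t).add (hQ t)

lemma CoeffHom.mul {P Q : MvPolynomial (Fin 3) PS} {dP dQ : ℕ}
    (hP : CoeffHom P dP) (hQ : CoeffHom Q dQ) : CoeffHom (P * Q) (dP + dQ) := fun t => by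
  rw [coeff_mul]
  exact IsHomogeneous.sum _ _ _ fun pr _ => (hP pr.1).mul (hQ pr.2)

lemma CoeffHom.cast {P : MvPolynomial (Fin 3) PS} {d d' : ℕ}
    (hP : CoeffHom P d) (h : d = d') : CoeffHom P d' := h ▸ hP

lemma CoeffHom.C {s : PS} {d : ℕ} (hs : s.IsHomogeneous d) : CoeffHom (C s) d := fun t => by
  rw [coeff_C]
  split
  · exact hs
  · exact isHomogeneous_zero _ _ _

lemma CoeffHom.monomial (u : Fin 3 →₀ ℕ) : CoeffHom (monomial u (1 : PS)) 0 := fun t => by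
  rw [coeff_monomial]
  split
  · exact isHomogeneous_one _ _
  · exact isHomogeneous_zero _ _ _

lemma CoeffHom.Xv (i : Fin 3) : CoeffHom (X i : MvPolynomial (Fin 3) PS) 0 := by
  rw [X]; exact CoeffHom.monomial _

lemma CoeffHom.one : CoeffHom 1 0 := by
  have h := CoeffHom.monomial (0 : Fin 3 →₀ ℕ)
  rwa [monomial_zero', MvPolynomial.C_1] at h

lemma CoeffHom.pow {P : MvPolynomial (Fin 3) PS} {d : ℕ} (hP : CoeffHom P d) :
    ∀ n : ℕ, CoeffHom (P ^ n) (n * d)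
  | 0 => by
      rw [pow_zero]
      exact CoeffHom.one.cast (by ring)
  | (n+1) => by
      rw [pow_succ]
      exact ((hP.pow n).mul hP).cast (by ring)

lemma CoeffHom.sum {ι : Type*} (s : Finset ι) (f : ι → MvPolynomial (Fin 3) PS) (d : ℕ)
    (h : ∀ i ∈ s, CoeffHom (f i) d) : CoeffHom (∑ i ∈ s, f i) d := fun t => by
  rw [coeff_sum]
  exact IsHomogeneous.sum _ _ _ fun i hi => h i hi t

lemma crossV_isHomogeneous {x y : Fin 3 → PS} (hx : ∀ i, (x i).IsHomogeneous 1)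
    (hy : ∀ i, (y i).IsHomogeneous 1) (i : Fin 3) : (crossV x y i).IsHomogeneous 2 := by
  fin_cases i <;>
    exact ((hx _).mul (hy _)).sub ((hx _).mul (hy _))

lemma linP_coeffHom {c : Fin 3 → PS} {d : ℕ} (hc : ∀ i, (c i).IsHomogeneous d) :
    CoeffHom (linP c) d := by
  rw [linP]
  exact CoeffHom.sum _ _ _ fun i _ =>
    ((CoeffHom.C (hc i)).mul (CoeffHom.Xv i)).cast (by ring)

lemma quadP_coeffHom {q : Sym (Fin 3) 2 → PS} {d : ℕ} (hq : ∀ m, (q m).IsHomogeneous d) :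
    CoeffHom (quadP q) d := by
  rw [quadP]
  exact CoeffHom.sum _ _ _ fun m _ =>
    ((CoeffHom.C (hq m)).mul (CoeffHom.monomial _)).cast (by ring)

lemma FF_coeffHom : CoeffHom FF 7 := by
  have hx : ∀ i, (vx i).IsHomogeneous 1 := fun i => isHomogeneous_X _ _
  have hy : ∀ i, (vy i).IsHomogeneous 1 := fun i => isHomogeneous_X _ _
  have hw : ∀ i, (vw i).IsHomogeneous 1 := fun i => isHomogeneous_X _ _
  have h1 : CoeffHom (linP (crossV vx vy) * (MvPolynomial.C (vu ^ 4) * quadP vq)) (2 + (4 + 1)) :=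
    (linP_coeffHom (crossV_isHomogeneous hx hy)).mul
      ((CoeffHom.C (isHomogeneous_X_pow _ 4)).mul
        (quadP_coeffHom fun m => isHomogeneous_X _ _))
  have h2 : CoeffHom (MvPolynomial.C vc * (linP (crossV vx vw)) ^ 3) (1 + 3 * 2) :=
    (CoeffHom.C (isHomogeneous_X _ _)).mul ((linP_coeffHom (crossV_isHomogeneous hx hw)).pow 3)
  rw [FF]
  exact (h1.cast (by norm_num)).add (h2.cast (by norm_num))

lemma hP_isHomogeneous (m : Sym (Fin 3) 3) : (hP m).IsHomogeneous 7 := FF_coeffHom _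

lemma gP_isHomogeneous (i : Fin 3) : (gP i).IsHomogeneous 1 := isHomogeneous_X _ _

end FlexProof
namespace FlexProof
/-! ### Specialization of the universal family at a parameter point -/

noncomputable def pvx (v : Fin 17 → ℂ) (i : Fin 3) : ℂ := v (pe (Sum.inl (Sum.inl i)))
noncomputable def pvy (v : Fin 17 → ℂ) (i : Fin 3) : ℂ := v (pe (Sum.inl (Sum.inr i)))
noncomputable def pvw (v : Fin 17 → ℂ) (i : Fin 3) : ℂ := v (pe (Sum.inr (Sum.inl i)))
noncomputable def pvq (v : Fin 17 → ℂ) (m : Sym (Fin 3) 2) : ℂ :=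
  v (pe (Sum.inr (Sum.inr (Sum.inl m))))
noncomputable def pvc (v : Fin 17 → ℂ) : ℂ := v (pe (Sum.inr (Sum.inr (Sum.inr 0))))
noncomputable def pvu (v : Fin 17 → ℂ) : ℂ := v (pe (Sum.inr (Sum.inr (Sum.inr 1))))

noncomputable def FFv (v : Fin 17 → ℂ) : MvPolynomial (Fin 3) ℂ :=
  MvPolynomial.map (eval v) FF

lemma map_linP (f : PS →+* ℂ) (c : Fin 3 → PS) :
    MvPolynomial.map f (linP c) = linP (fun i => f (c i)) := by
  rw [linP, linP]
  simp only [_root_.map_sum, _root_.map_mul, MvPolynomial.map_C, MvPolynomial.map_X]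

lemma map_quadP (f : PS →+* ℂ) (q : Sym (Fin 3) 2 → PS) :
    MvPolynomial.map f (quadP q) = quadP (fun m => f (q m)) := by
  rw [quadP, quadP]
  simp only [_root_.map_sum, _root_.map_mul, MvPolynomial.map_C, MvPolynomial.map_monomial,
    _root_.map_one]

lemma crossV_map (f : PS →+* ℂ) (x y : Fin 3 → PS) :
    (fun i => f (crossV x y i)) = crossV (fun j => f (x j)) (fun j => f (y j)) := by
  funext i
  fin_cases i <;> simp [crossV]

lemma FFv_eq (v : Fin 17 → ℂ) :
    FFv v = linP (crossV (pvx v) (pvy v)) * (C ((pvu v) ^ 4) * quadP (pvq v))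
      + C (pvc v) * (linP (crossV (pvx v) (pvw v))) ^ 3 := by
  simp only [FFv, FF, _root_.map_add, _root_.map_mul, _root_.map_pow, MvPolynomial.map_C,
    map_linP, map_quadP, crossV_map]
  simp only [vx, vy, vw, vq, vc, vu, eval_X, _root_.map_pow]
  rfl

lemma linP_isHomogeneous (c : Fin 3 → ℂ) : (linP c).IsHomogeneous 1 := by
  rw [linP]
  exact IsHomogeneous.sum _ _ _ fun i _ => by
    simpa using (isHomogeneous_C _ (c i)).mul (isHomogeneous_X _ i)

lemma quadP_isHomogeneous (q : Sym (Fin 3) 2 → ℂ) : (quadP q).IsHomogeneous 2 := by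
  rw [quadP]
  exact IsHomogeneous.sum _ _ _ fun m _ => by
    rw [C_mul_monomial, mul_one]
    exact isHomogeneous_monomial _ (mtf_degree m)

lemma FFv_isHomogeneous (v : Fin 17 → ℂ) : (FFv v).IsHomogeneous 3 := by
  rw [FFv_eq]
  have h1 := (linP_isHomogeneous (crossV (pvx v) (pvy v))).mul
    ((isHomogeneous_C _ ((pvu v) ^ 4)).mul (quadP_isHomogeneous (pvq v)))
  have h2 := (isHomogeneous_C _ (pvc v)).mul ((linP_isHomogeneous (crossV (pvx v) (pvw v))).pow 3)
  exact h1.add h2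

/-! ### Evaluation and derivative computations -/

lemma eval_linP (u : Fin 3 → ℂ) (c : Fin 3 → ℂ) :
    eval u (linP c) = ∑ i, c i * u i := by
  rw [linP, map_sum]; simp

lemma cross_dot_self (x y : Fin 3 → ℂ) : (∑ i, crossV x y i * x i) = 0 := by
  simp [crossV, Fin.sum_univ_three]; ring

lemma pderiv_linP (p : Fin 3) (c : Fin 3 → ℂ) :
    pderiv p (linP c) = C (c p) := by
  rw [linP, map_sum]
  simp only [pderiv_C_mul, pderiv_X, Pi.single_apply]
  simp [mul_ite, Finset.sum_ite_eq', Finset.mem_univ]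

lemma hess_AG (c : Fin 3 → ℂ) (G : MvPolynomial (Fin 3) ℂ) (u : Fin 3 → ℂ)
    (hu : eval u (linP c) = 0) (p q : Fin 3) :
    eval u (pderiv p (pderiv q (linP c * G))) =
      c q * eval u (pderiv p G) + c p * eval u (pderiv q G) := by
  rw [pderiv_mul, pderiv_linP, map_add, pderiv_C_mul, pderiv_mul, pderiv_linP]
  simp [hu]

lemma pderiv2_pow3 (c : Fin 3 → ℂ) (p q : Fin 3) :
    pderiv p (pderiv q ((linP c) ^ 3)) = 6 * (C (c p) * C (c q) * linP c) := by
  rw [show (linP c) ^ 3 = linP c * (linP c * linP c) from by ring]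
  simp only [pderiv_mul, pderiv_linP, _root_.map_add, pderiv_C]
  ring

lemma hess_B3 (cc : ℂ) (c : Fin 3 → ℂ) (u : Fin 3 → ℂ)
    (hu : eval u (linP c) = 0) (p q : Fin 3) :
    eval u (pderiv p (pderiv q (C cc * (linP c) ^ 3))) = 0 := by
  rw [pderiv_C_mul, pderiv_C_mul, pderiv2_pow3]
  simp [hu]

lemma dir1_eval (v : Fin 17 → ℂ) : eval (pvx v) (FFv v) = 0 := by
  have hA : eval (pvx v) (linP (crossV (pvx v) (pvy v))) = 0 := by
    rw [eval_linP]; exact cross_dot_self _ _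
  have hB : eval (pvx v) (linP (crossV (pvx v) (pvw v))) = 0 := by
    rw [eval_linP]; exact cross_dot_self _ _
  rw [FFv_eq]
  simp [hA, hB]

lemma dir1_hess (v : Fin 17 → ℂ) : eval (pvx v) (hessianDet (FFv v)) = 0 := by
  have hA : eval (pvx v) (linP (crossV (pvx v) (pvy v))) = 0 := by
    rw [eval_linP]; exact cross_dot_self _ _
  have hB : eval (pvx v) (linP (crossV (pvx v) (pvw v))) = 0 := by
    rw [eval_linP]; exact cross_dot_self _ _
  set α := crossV (pvx v) (pvy v) with hα
  set G := (C ((pvu v) ^ 4) * quadP (pvq v) : MvPolynomial (Fin 3) ℂ) with hG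
  have hent : ∀ p q : Fin 3, eval (pvx v) (pderiv p (pderiv q (FFv v))) =
      α q * eval (pvx v) (pderiv p G) + α p * eval (pvx v) (pderiv q G) := by
    intro p q
    rw [FFv_eq, _root_.map_add, _root_.map_add, _root_.map_add]
    rw [hess_AG α G (pvx v) hA p q, hess_B3 (pvc v) _ (pvx v) hB p q, add_zero]
  rw [hessianDet, RingHom.map_det, RingHom.mapMatrix_apply]
  have hmap : (Matrix.of fun i j : Fin 3 => pderiv i (pderiv j (FFv v))).map (eval (pvx v))
      = Matrix.of (fun i j : Fin 3 =>
          α j * eval (pvx v) (pderiv i G) + α i * eval (pvx v) (pderiv j G)) := by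
    ext i j
    simp only [Matrix.map_apply, Matrix.of_apply]
    exact hent i j
  rw [hmap, Matrix.det_fin_three]
  simp only [Matrix.of_apply]
  ring

lemma image_subset : rationalImage gP hP ⊆ FlexVariety := by
  rintro z ⟨v, hg, hh, rfl⟩
  have hxv : (fun i => eval v (gP i)) = pvx v := funext fun i => by
    rw [gP, vx, eval_X]; rfl
  have hcub : cubicOf (fun m => eval v (hP m)) = FFv v := by
    have hav : (fun m => eval v (hP m)) = fun m => coeff (mtf m) (FFv v) :=
      funext fun m => by rw [hP, FFv, coeff_map]
    rw [hav]
    exact cubicOf_coeff_eq _ (FFv_isHomogeneous v)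
  refine ⟨fun i => eval v (gP i), hg, fun m => eval v (hP m), hh, rfl, ?_, ?_⟩
  · rw [hcub, hxv]; exact dir1_eval v
  · rw [hcub, hxv]; exact dir1_hess v

/-! ### Linear algebra helpers -/

lemma cross_entry0 (x y : Fin 3 → ℂ) : crossV x y 0 = x 1 * y 2 - x 2 * y 1 := rfl
lemma cross_entry1 (x y : Fin 3 → ℂ) : crossV x y 1 = x 2 * y 0 - x 0 * y 2 := rfl
lemma cross_entry2 (x y : Fin 3 → ℂ) : crossV x y 2 = x 0 * y 1 - x 1 * y 0 := rfl

lemma cross_zero_dep {x y : Fin 3 → ℂ} (hx : x ≠ 0)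
    (h : ∀ i, crossV x y i = 0) : ∃ cst : ℂ, y = cst • x := by
  have h0 := h 0; have h1 := h 1; have h2 := h 2
  rw [cross_entry0] at h0; rw [cross_entry1] at h1; rw [cross_entry2] at h2
  have hex : x 0 ≠ 0 ∨ x 1 ≠ 0 ∨ x 2 ≠ 0 := by
    by_contra hc
    push_neg at hc
    exact hx (funext fun j => by fin_cases j <;>
      first
      | exact hc.1
      | exact hc.2.1
      | exact hc.2.2)
  rcases hex with hi | hi | hi
  · refine ⟨y 0 / x 0, funext fun j => ?_⟩
    fin_cases j
    · show y 0 = y 0 / x 0 * x 0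
      field_simp
    · show y 1 = y 0 / x 0 * x 1
      rw [div_mul_eq_mul_div, eq_div_iff hi]
      linear_combination h2
    · show y 2 = y 0 / x 0 * x 2
      rw [div_mul_eq_mul_div, eq_div_iff hi]
      linear_combination -h1
  · refine ⟨y 1 / x 1, funext fun j => ?_⟩
    fin_cases j
    · show y 0 = y 1 / x 1 * x 0
      rw [div_mul_eq_mul_div, eq_div_iff hi]
      linear_combination -h2
    · show y 1 = y 1 / x 1 * x 1
      field_simp
    · show y 2 = y 1 / x 1 * x 2
      rw [div_mul_eq_mul_div, eq_div_iff hi]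
      linear_combination h0
  · refine ⟨y 2 / x 2, funext fun j => ?_⟩
    fin_cases j
    · show y 0 = y 2 / x 2 * x 0
      rw [div_mul_eq_mul_div, eq_div_iff hi]
      linear_combination h1
    · show y 1 = y 2 / x 2 * x 1
      rw [div_mul_eq_mul_div, eq_div_iff hi]
      linear_combination -h0
    · show y 2 = y 2 / x 2 * x 2
      field_simp

lemma exists_cross_ne {x y : Fin 3 → ℂ} (hx : x ≠ 0)
    (hind : ∀ cst : ℂ, y ≠ cst • x) : ∃ k, crossV x y k ≠ 0 := by
  by_contra hc
  push_neg at hc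
  obtain ⟨cst, hcst⟩ := cross_zero_dep hx hc
  exact hind cst hcst

lemma quad_root (A B C : ℂ) :
    ∃ β γ : ℂ, (β ≠ 0 ∨ γ ≠ 0) ∧ A * β ^ 2 + B * (β * γ) + C * γ ^ 2 = 0 := by
  by_cases hA : A = 0
  · exact ⟨1, 0, Or.inl one_ne_zero, by simp [hA]⟩
  · obtain ⟨s, hs⟩ := IsAlgClosed.exists_pow_nat_eq (B ^ 2 - 4 * A * C) (n := 2) (by norm_num)
    refine ⟨-B + s, 2 * A, Or.inr (by simp [hA]), ?_⟩
    linear_combination A * hs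


/-! ### Linear substitutions and divisibility by a linear form -/

noncomputable def subM (M : Matrix (Fin 3) (Fin 3) ℂ) :
    MvPolynomial (Fin 3) ℂ →ₐ[ℂ] MvPolynomial (Fin 3) ℂ :=
  aeval (fun i => ∑ j, C (M i j) * X j)

lemma eval_subM (M : Matrix (Fin 3) (Fin 3) ℂ) (u : Fin 3 → ℂ) (P : MvPolynomial (Fin 3) ℂ) :
    eval u (subM M P) = eval (M.mulVec u) P := by
  rw [subM, aeval_def, MvPolynomial.algebraMap_eq, eval_eval₂]
  have h1 : (eval u).comp (C : ℂ →+* MvPolynomial (Fin 3) ℂ) = RingHom.id ℂ := by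
    ext r; simp
  rw [h1]
  have h2 : (fun i => eval u (∑ j, C (M i j) * X j)) = M.mulVec u := by
    funext i
    simp [Matrix.mulVec, dotProduct]
  rw [h2, eval₂_id]

lemma subM_comp (M N : Matrix (Fin 3) (Fin 3) ℂ) (P : MvPolynomial (Fin 3) ℂ) :
    subM N (subM M P) = subM (M * N) P := by
  have key : (subM N).comp (subM M) = subM (M * N) := by
    apply MvPolynomial.algHom_ext
    intro i
    simp only [AlgHom.comp_apply, subM, aeval_X, _root_.map_sum, _root_.map_mul, aeval_C]
    simp only [algebraMap_eq]
    simp_rw [Finset.mul_sum]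
    rw [Finset.sum_comm]
    refine Finset.sum_congr rfl fun k _ => ?_
    rw [Matrix.mul_apply, map_sum (C : ℂ →+* MvPolynomial (Fin 3) ℂ), Finset.sum_mul]
    refine Finset.sum_congr rfl fun j _ => ?_
    rw [C_mul]
    ring
  calc subM N (subM M P) = ((subM N).comp (subM M)) P := rfl
    _ = subM (M * N) P := by rw [key]

lemma subM_one (P : MvPolynomial (Fin 3) ℂ) : subM 1 P = P := by
  have key : subM (1 : Matrix (Fin 3) (Fin 3) ℂ) = AlgHom.id ℂ _ := by
    apply MvPolynomial.algHom_ext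
    intro i
    simp only [subM, aeval_X, AlgHom.coe_id, id_eq]
    rw [Finset.sum_eq_single i]
    · simp
    · intro j _ hne
      rw [Matrix.one_apply_ne (Ne.symm hne)]
      simp
    · intro hmem; exact absurd (Finset.mem_univ i) hmem
  rw [key]; rfl

lemma subM_X (M : Matrix (Fin 3) (Fin 3) ℂ) (i : Fin 3) :
    subM M (X i) = linP (fun j => M i j) := by
  rw [subM, aeval_X, linP]

lemma dvd_X0 (P : MvPolynomial (Fin 3) ℂ)
    (hP : ∀ u : Fin 3 → ℂ, u 0 = 0 → eval u P = 0) :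
    ∃ Q, P = X 0 * Q := by
  have h0 : (finSuccEquiv ℂ 2 P).coeff 0 = 0 := by
    apply MvPolynomial.funext
    intro u
    rw [map_zero]
    have h1 := eval_eq_eval_mv_eval' u 0 P
    have h2 : eval (Fin.cons 0 u : Fin 3 → ℂ) P = 0 := hP _ (Fin.cons_zero _ _)
    rw [h2] at h1
    have h3 : (Polynomial.map (eval u) (finSuccEquiv ℂ 2 P)).coeff 0 = 0 := by
      rw [Polynomial.coeff_zero_eq_eval_zero]
      exact h1.symm
    rwa [Polynomial.coeff_map] at h3
  obtain ⟨Qq, hQq⟩ := Polynomial.X_dvd_iff.mpr h0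
  refine ⟨(finSuccEquiv ℂ 2).symm Qq, ?_⟩
  have hP2 : P = (finSuccEquiv ℂ 2).symm (finSuccEquiv ℂ 2 P) :=
    ((finSuccEquiv ℂ 2).symm_apply_apply P).symm
  rw [hP2, hQq, _root_.map_mul]
  congr 1
  have := congrArg (finSuccEquiv ℂ 2).symm (finSuccEquiv_X_zero (R := ℂ) (n := 2))
  rw [(finSuccEquiv ℂ 2).symm_apply_apply] at this
  exact this.symm

/-- A cubic vanishing on the line spanned by `x, y` is divisible by the linear form
with coefficients `crossV x y`. -/
lemma divide_line {x y : Fin 3 → ℂ} (k : Fin 3) (hk : crossV x y k ≠ 0)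
    (G : MvPolynomial (Fin 3) ℂ)
    (hline : ∀ s t : ℂ, eval (fun i => s * x i + t * y i) G = 0) :
    ∃ Q, G = linP (crossV x y) * Q := by
  classical
  set w : Fin 3 → ℂ := fun i => if i = k then 1 else 0 with hw
  set M : Matrix (Fin 3) (Fin 3) ℂ := Matrix.of (fun i j => ![w i, x i, y i] j) with hM
  have hdet : M.det = ∑ i, w i * crossV x y i := by
    rw [Matrix.det_fin_three]
    simp only [hM, Matrix.of_apply, Matrix.cons_val_zero, Matrix.cons_val_one, Matrix.head_cons,
      Matrix.cons_val_two, Matrix.tail_cons,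
      Fin.sum_univ_three, cross_entry0, cross_entry1, cross_entry2]
    ring
  have hsum : (∑ i, w i * crossV x y i) = crossV x y k := by
    rw [hw]
    simp only [ite_mul, one_mul, zero_mul]
    rw [Finset.sum_ite_eq' Finset.univ k (fun i => crossV x y i)]
    simp
  have hdet_ne : M.det ≠ 0 := by rw [hdet, hsum]; exact hk
  have hvan : ∀ u : Fin 3 → ℂ, u 0 = 0 → eval u (subM M G) = 0 := by
    intro u hu0
    rw [eval_subM]
    have hmv : M.mulVec u = fun i => u 1 * x i + u 2 * y i := by
      funext i
      simp [Matrix.mulVec, dotProduct, Fin.sum_univ_three, hM, hu0]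
      ring
    rw [hmv]
    exact hline _ _
  obtain ⟨Q', hQ'⟩ := dvd_X0 (subM M G) hvan
  have hG : G = subM M⁻¹ (subM M G) := by
    rw [subM_comp, Matrix.mul_nonsing_inv M (Ne.isUnit hdet_ne), subM_one]
  have hadj : ∀ j, M.adjugate 0 j = crossV x y j := by
    intro j
    rw [Matrix.adjugate_fin_three]
    fin_cases j <;>
      (simp [hM, cross_entry0, cross_entry1, cross_entry2]; try ring)
  have hrow : ∀ j, M⁻¹ 0 j = (M.det)⁻¹ * crossV x y j := by
    intro j
    rw [Matrix.inv_def, Matrix.smul_apply, Ring.inverse_eq_inv', smul_eq_mul, hadj]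
  refine ⟨C (M.det)⁻¹ * subM M⁻¹ Q', ?_⟩
  rw [hG, hQ', _root_.map_mul, subM_X]
  have hlin : linP (fun j => M⁻¹ 0 j) = C (M.det)⁻¹ * linP (crossV x y) := by
    rw [linP, linP, Finset.mul_sum]
    refine Finset.sum_congr rfl fun j _ => ?_
    rw [hrow j, C_mul]
    ring
  rw [hlin]
  ring

/-! ### Extracting the homogeneous quotient -/

lemma hc_eq_self {p : MvPolynomial (Fin 3) ℂ} {n : ℕ} (hp : p.IsHomogeneous n) :
    homogeneousComponent n p = p := by
  ext d
  rw [coeff_homogeneousComponent]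
  split
  · rfl
  · next h => exact (hp.coeff_eq_zero h).symm

lemma hc_eq_zero {p : MvPolynomial (Fin 3) ℂ} {k n : ℕ} (hp : p.IsHomogeneous k)
    (h : k ≠ n) : homogeneousComponent n p = 0 := by
  ext d
  rw [coeff_homogeneousComponent, coeff_zero]
  split
  · next hd => exact hp.coeff_eq_zero (by rw [hd]; exact Ne.symm h)
  · rfl

lemma extract_quad {A G Q : MvPolynomial (Fin 3) ℂ} (hA : A.IsHomogeneous 1)
    (hG : G.IsHomogeneous 3) (hQ : G = A * Q) :
    G = A * homogeneousComponent 2 Q := by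
  have key : ∀ i : ℕ, homogeneousComponent 3 (A * homogeneousComponent i Q)
      = if i = 2 then A * homogeneousComponent 2 Q else 0 := by
    intro i
    split
    · next h =>
        subst h
        exact hc_eq_self (hA.mul (homogeneousComponent_isHomogeneous 2 Q))
    · next h =>
        exact hc_eq_zero (hA.mul (homogeneousComponent_isHomogeneous i Q)) (by omega)
  calc G = homogeneousComponent 3 G := (hc_eq_self hG).symm
    _ = homogeneousComponent 3
        (∑ i ∈ Finset.range (Q.totalDegree + 1), A * homogeneousComponent i Q) := by
          rw [← Finset.mul_sum, sum_homogeneousComponent, ← hQ]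
    _ = ∑ i ∈ Finset.range (Q.totalDegree + 1),
          homogeneousComponent 3 (A * homogeneousComponent i Q) := map_sum _ _ _
    _ = A * homogeneousComponent 2 Q := by
        simp_rw [key]
        rw [Finset.sum_ite_eq' (Finset.range (Q.totalDegree + 1)) 2
          (fun _ => A * homogeneousComponent 2 Q)]
        split
        · rfl
        · next h =>
            have hlt : Q.totalDegree < 2 := by
              simp only [Finset.mem_range] at h
              omega
            rw [homogeneousComponent_eq_zero _ _ hlt, mul_zero]

lemma exists_coord_ne {x : Fin 3 → ℂ} (hx : x ≠ 0) : x 0 ≠ 0 ∨ x 1 ≠ 0 ∨ x 2 ≠ 0 := by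
  by_contra hc
  push_neg at hc
  exact hx (funext fun j => by
    fin_cases j
    · exact hc.1
    · exact hc.2.1
    · exact hc.2.2)

lemma cross_swap (x y w : Fin 3 → ℂ) :
    (∑ i, crossV x w i * y i) = -(∑ i, crossV x y i * w i) := by
  simp only [Fin.sum_univ_three, cross_entry0, cross_entry1, cross_entry2]
  ring

lemma two_mul_eq_zero {e : ℂ} (h : (0 : ℂ) = 2 * e) : e = 0 :=
  (mul_eq_zero.mp h.symm).resolve_left two_ne_zero

/-- From the vanishing of the Hessian determinant (and `F(x) = 0`), produce a direction `y`,
independent from `x`, in which the cubic has contact of order three at `x`. -/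
lemma flex_direction {a : Sym (Fin 3) 3 → ℂ} {x : Fin 3 → ℂ} (hx : x ≠ 0)
    (hdet : (Matrix.of fun p q : Fin 3 =>
      eval x (pderiv p (pderiv q (cubicOf a)))).det = 0) :
    ∃ y : Fin 3 → ℂ, (∀ cst : ℂ, y ≠ cst • x) ∧
      (∑ j, y j * eval x (pderiv j (cubicOf a))) = 0 ∧
      (∑ j, x j * eval y (pderiv j (cubicOf a))) = 0 := by
  obtain ⟨z, hz0, hzker⟩ := (Matrix.exists_mulVec_eq_zero_iff).mpr hdet
  have hker : ∀ p, (∑ q, eval x (pderiv p (pderiv q (cubicOf a))) * z q) = 0 := by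
    intro p
    have h := congrFun hzker p
    simpa [Matrix.mulVec, dotProduct, Matrix.of_apply] using h
  by_cases hzx : ∃ cst : ℂ, z = cst • x
  · -- the kernel vector is proportional to `x` : singular point case
    obtain ⟨cst, hz⟩ := hzx
    have hcst : cst ≠ 0 := by
      rintro rfl
      rw [zero_smul] at hz
      exact hz0 hz
    have hxker : ∀ p, (∑ q, eval x (pderiv p (pderiv q (cubicOf a))) * x q) = 0 := by
      intro p
      have h1 := hker p
      have h2 : (∑ q, eval x (pderiv p (pderiv q (cubicOf a))) * z q)
          = cst * ∑ q, eval x (pderiv p (pderiv q (cubicOf a))) * x q := by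
        rw [Finset.mul_sum]
        exact Finset.sum_congr rfl fun q _ => by rw [hz]; simp [Pi.smul_apply]; ring
      rw [h2] at h1
      exact (mul_eq_zero.mp h1).resolve_left hcst
    have hgrad : ∀ p, eval x (pderiv p (cubicOf a)) = 0 := by
      intro p
      have h4 := cubic_R4 a x p
      have h5 : (∑ q, x q * eval x (pderiv p (pderiv q (cubicOf a))))
          = ∑ q, eval x (pderiv p (pderiv q (cubicOf a))) * x q :=
        Finset.sum_congr rfl fun q _ => mul_comm _ _
      rw [h5, hxker p] at h4
      exact two_mul_eq_zero h4
    rcases exists_coord_ne hx with hi | hi | hi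
    · obtain ⟨β, γ, hβγ, hq⟩ := quad_root (eval x (pderiv 1 (pderiv 1 (cubicOf a))))
        (eval x (pderiv 1 (pderiv 2 (cubicOf a))) + eval x (pderiv 2 (pderiv 1 (cubicOf a))))
        (eval x (pderiv 2 (pderiv 2 (cubicOf a))))
      refine ⟨![0, β, γ], ?_, ?_, ?_⟩
      · intro cst hy
        rcases eq_or_ne cst 0 with rfl | hc0
        · have hβ : β = 0 := by simpa using congrFun hy 1
          have hγ : γ = 0 := by simpa using congrFun hy 2
          rcases hβγ with h | h
          · exact h hβ
          · exact h hγ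
        · have h0 : (0 : ℂ) = cst * x 0 := by simpa using congrFun hy 0
          exact hi ((mul_eq_zero.mp h0.symm).resolve_left hc0)
      · simp [Fin.sum_univ_three, hgrad]
      · have h2 := cubic_R2 a x ![0, β, γ]
        have hL : (∑ p, ∑ q, (![(0:ℂ), β, γ]) p * (![(0:ℂ), β, γ]) q *
              eval x (pderiv p (pderiv q (cubicOf a))))
            = eval x (pderiv 1 (pderiv 1 (cubicOf a))) * β ^ 2 +
              (eval x (pderiv 1 (pderiv 2 (cubicOf a))) +
                eval x (pderiv 2 (pderiv 1 (cubicOf a)))) * (β * γ) +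
              eval x (pderiv 2 (pderiv 2 (cubicOf a))) * γ ^ 2 := by
          simp [Fin.sum_univ_three]
          ring
        rw [hL, hq] at h2
        exact two_mul_eq_zero h2
    · obtain ⟨β, γ, hβγ, hq⟩ := quad_root (eval x (pderiv 0 (pderiv 0 (cubicOf a))))
        (eval x (pderiv 0 (pderiv 2 (cubicOf a))) + eval x (pderiv 2 (pderiv 0 (cubicOf a))))
        (eval x (pderiv 2 (pderiv 2 (cubicOf a))))
      refine ⟨![β, 0, γ], ?_, ?_, ?_⟩
      · intro cst hy
        rcases eq_or_ne cst 0 with rfl | hc0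
        · have hβ : β = 0 := by simpa using congrFun hy 0
          have hγ : γ = 0 := by simpa using congrFun hy 2
          rcases hβγ with h | h
          · exact h hβ
          · exact h hγ
        · have h0 : (0 : ℂ) = cst * x 1 := by simpa using congrFun hy 1
          exact hi ((mul_eq_zero.mp h0.symm).resolve_left hc0)
      · simp [Fin.sum_univ_three, hgrad]
      · have h2 := cubic_R2 a x ![β, 0, γ]
        have hL : (∑ p, ∑ q, (![β, (0:ℂ), γ]) p * (![β, (0:ℂ), γ]) q *
              eval x (pderiv p (pderiv q (cubicOf a))))
            = eval x (pderiv 0 (pderiv 0 (cubicOf a))) * β ^ 2 +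
              (eval x (pderiv 0 (pderiv 2 (cubicOf a))) +
                eval x (pderiv 2 (pderiv 0 (cubicOf a)))) * (β * γ) +
              eval x (pderiv 2 (pderiv 2 (cubicOf a))) * γ ^ 2 := by
          simp [Fin.sum_univ_three]
          ring
        rw [hL, hq] at h2
        exact two_mul_eq_zero h2
    · obtain ⟨β, γ, hβγ, hq⟩ := quad_root (eval x (pderiv 0 (pderiv 0 (cubicOf a))))
        (eval x (pderiv 0 (pderiv 1 (cubicOf a))) + eval x (pderiv 1 (pderiv 0 (cubicOf a))))
        (eval x (pderiv 1 (pderiv 1 (cubicOf a))))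
      refine ⟨![β, γ, 0], ?_, ?_, ?_⟩
      · intro cst hy
        rcases eq_or_ne cst 0 with rfl | hc0
        · have hβ : β = 0 := by simpa using congrFun hy 0
          have hγ : γ = 0 := by simpa using congrFun hy 1
          rcases hβγ with h | h
          · exact h hβ
          · exact h hγ
        · have h0 : (0 : ℂ) = cst * x 2 := by simpa using congrFun hy 2
          exact hi ((mul_eq_zero.mp h0.symm).resolve_left hc0)
      · simp [Fin.sum_univ_three, hgrad]
      · have h2 := cubic_R2 a x ![β, γ, 0]
        have hL : (∑ p, ∑ q, (![β, γ, (0:ℂ)]) p * (![β, γ, (0:ℂ)]) q *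
              eval x (pderiv p (pderiv q (cubicOf a))))
            = eval x (pderiv 0 (pderiv 0 (cubicOf a))) * β ^ 2 +
              (eval x (pderiv 0 (pderiv 1 (cubicOf a))) +
                eval x (pderiv 1 (pderiv 0 (cubicOf a)))) * (β * γ) +
              eval x (pderiv 1 (pderiv 1 (cubicOf a))) * γ ^ 2 := by
          simp [Fin.sum_univ_three]
          ring
        rw [hL, hq] at h2
        exact two_mul_eq_zero h2
  · -- the kernel vector is independent from `x` : honest flex case
    push_neg at hzx
    refine ⟨z, hzx, ?_, ?_⟩
    · have h3 := cubic_R3 a x z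
      have hL : (∑ p, ∑ q, x p * z q * eval x (pderiv p (pderiv q (cubicOf a))))
          = ∑ p, x p * (∑ q, eval x (pderiv p (pderiv q (cubicOf a))) * z q) := by
        refine Finset.sum_congr rfl fun p _ => ?_
        rw [Finset.mul_sum]
        exact Finset.sum_congr rfl fun q _ => by ring
      rw [hL] at h3
      simp only [hker, mul_zero, Finset.sum_const_zero] at h3
      exact two_mul_eq_zero h3
    · have h2 := cubic_R2 a x z
      have hL : (∑ p, ∑ q, z p * z q * eval x (pderiv p (pderiv q (cubicOf a))))
          = ∑ p, z p * (∑ q, eval x (pderiv p (pderiv q (cubicOf a))) * z q) := by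
        refine Finset.sum_congr rfl fun p _ => ?_
        rw [Finset.mul_sum]
        exact Finset.sum_congr rfl fun q _ => by ring
      rw [hL] at h2
      simp only [hker, mul_zero, Finset.sum_const_zero] at h2
      exact two_mul_eq_zero h2

lemma mk_congr₁ (u u' : Fin 3 → ℂ) (h : u ≠ 0) (h' : u' ≠ 0) (he : u = u') :
    Projectivization.mk ℂ u h = Projectivization.mk ℂ u' h' := by subst he; rfl

lemma mk_congr₂ (u u' : Sym (Fin 3) 3 → ℂ) (h : u ≠ 0) (h' : u' ≠ 0) (he : u = u') :
    Projectivization.mk ℂ u h = Projectivization.mk ℂ u' h' := by subst he; rfl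

lemma flex_subset_image : FlexVariety ⊆ rationalImage gP hP := by
  rintro z ⟨x, hx, a, ha, rfl, hf0, hH⟩
  have hdet : (Matrix.of fun p q : Fin 3 =>
      eval x (pderiv p (pderiv q (cubicOf a)))).det = 0 := by
    rw [hessianDet, RingHom.map_det, RingHom.mapMatrix_apply] at hH
    rw [show (Matrix.of fun p q : Fin 3 => eval x (pderiv p (pderiv q (cubicOf a))))
      = ((Matrix.of fun i j : Fin 3 => pderiv i (pderiv j (cubicOf a))).map (eval x))
      from by ext p q; rfl]
    exact hH
  obtain ⟨y, hind, hDxy, hDyx⟩ := flex_direction hx hdet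
  obtain ⟨k, hk⟩ := exists_cross_ne hx hind
  classical
  set w : Fin 3 → ℂ := fun i => if i = k then 1 else 0 with hw
  have hBy : (∑ i, crossV x w i * y i) = -(crossV x y k) := by
    rw [cross_swap x y w]
    congr 1
    rw [hw]
    simp only [mul_ite, mul_one, mul_zero]
    rw [Finset.sum_ite_eq' Finset.univ k (fun i => crossV x y i)]
    simp
  have hβ_ne : -(crossV x y k) ≠ 0 := neg_ne_zero.mpr hk
  set cc : ℂ := eval y (cubicOf a) / (-(crossV x y k)) ^ 3 with hcc
  set G : MvPolynomial (Fin 3) ℂ := cubicOf a - C cc * (linP (crossV x w)) ^ 3 with hG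
  have hlineB : ∀ s t : ℂ, eval (fun i => s * x i + t * y i) (linP (crossV x w))
      = t * (-(crossV x y k)) := by
    intro s t
    rw [eval_linP]
    have e1 : (∑ i, crossV x w i * (s * x i + t * y i))
        = s * (∑ i, crossV x w i * x i) + t * (∑ i, crossV x w i * y i) := by
      rw [Finset.mul_sum, Finset.mul_sum, ← Finset.sum_add_distrib]
      exact Finset.sum_congr rfl fun i _ => by ring
    rw [e1, cross_dot_self x w, hBy]
    ring
  have hline : ∀ s t : ℂ, eval (fun i => s * x i + t * y i) G = 0 := by
    intro s t
    rw [hG, map_sub, _root_.map_mul, map_pow, eval_C, hlineB,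
      cubic_taylor a x y s t, hf0, hDxy, hDyx, hcc]
    field_simp
    ring
  obtain ⟨Q, hQ⟩ := divide_line k hk G hline
  have hG3 : G.IsHomogeneous 3 := by
    refine (cubicOf_isHomogeneous a).sub ?_
    exact (isHomogeneous_C (Fin 3) cc).mul ((linP_isHomogeneous (crossV x w)).pow 3)
  have hGQ2 : G = linP (crossV x y) * homogeneousComponent 2 Q :=
    extract_quad (linP_isHomogeneous _) hG3 hQ
  set qv : Sym (Fin 3) 2 → ℂ := fun m => coeff (mtf m) (homogeneousComponent 2 Q) with hqv
  have hquadQ : quadP qv = homogeneousComponent 2 Q := by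
    rw [quadP, hqv]
    exact sum_sym_coeff _ (homogeneousComponent_isHomogeneous 2 Q)
  set v : Fin 17 → ℂ := fun idx =>
    (match pe.symm idx with
      | Sum.inl (Sum.inl i) => x i
      | Sum.inl (Sum.inr i) => y i
      | Sum.inr (Sum.inl i) => w i
      | Sum.inr (Sum.inr (Sum.inl m)) => qv m
      | Sum.inr (Sum.inr (Sum.inr j)) => if j = 0 then cc else 1) with hv
  have hpvx : pvx v = x := funext fun i => by rw [pvx, hv]; simp
  have hpvy : pvy v = y := funext fun i => by rw [pvy, hv]; simp
  have hpvw : pvw v = w := funext fun i => by rw [pvw, hv]; simp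
  have hpvq : pvq v = qv := funext fun m => by rw [pvq, hv]; simp
  have hpvc : pvc v = cc := by rw [pvc, hv]; simp
  have hpvu : pvu v = 1 := by rw [pvu, hv]; simp
  have hFFv : FFv v = cubicOf a := by
    rw [FFv_eq, hpvx, hpvy, hpvw, hpvq, hpvc, hpvu, hquadQ, one_pow, MvPolynomial.C_1, one_mul,
      ← hGQ2, hG]
    ring
  have hgv : (fun i => eval v (gP i)) = x := funext fun i => by
    rw [gP, vx, eval_X]
    exact congrFun hpvx i
  have hav : (fun m => eval v (hP m)) = a := funext fun m => by
    rw [hP, show eval v (coeff (mtf m) FF) = coeff (mtf m) (FFv v) from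
      by rw [FFv, coeff_map], hFFv]
    exact coeff_cubicOf a m
  refine ⟨v, by rw [hgv]; exact hx, by rw [hav]; exact ha, ?_⟩
  exact Prod.ext (mk_congr₁ _ _ _ _ hgv.symm) (mk_congr₂ _ _ _ _ hav.symm)

lemma image_eq : rationalImage gP hP = FlexVariety :=
  Set.Subset.antisymm image_subset flex_subset_image


end FlexProof


/-- The variety of flexes of plane cubics `X ⊆ P² × P⁹` is unirational:
there is a dominant rational map from a projective space `P^N` to `X`, i.e. a rational map
given by homogeneous forms, whose image lies in `X` and is dense in `X`. -/
theorem stmt4 :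
    ∃ (N d₁ d₂ : ℕ) (g : Fin 3 → MvPolynomial (Fin (N + 1)) ℂ)
      (h : Sym (Fin 3) 3 → MvPolynomial (Fin (N + 1)) ℂ),
      (∀ i, (g i).IsHomogeneous d₁) ∧ (∀ m, (h m).IsHomogeneous d₂) ∧
      IsDenseInFlexVariety (rationalImage g h) := by
  refine ⟨16, 1, 7, FlexProof.gP, FlexProof.hP, FlexProof.gP_isHomogeneous,
    FlexProof.hP_isHomogeneous, ?_, ?_⟩
  · rw [FlexProof.image_eq]
  · intro P m n _ hvan
    rwa [FlexProof.image_eq] at hvan
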